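/- Let G=(V,E) be a finite rooted tree with root 1, and let ρ ∈ [0,1)^V satisfy ∑_{v'∈Ā(v)} ρ_{v'} < 1 for all v ∈ V. Define c(ρ) = ∑_{n ∈ ℕ^V} ∏_{v∈V} ρ_v^{n_v} · C(∑_{v'∈ D̄(v)} n_{v'}, n_v), where C denotes the binomial coefficient and D̄(v) is the set consisting of v and its descendants. Then this sum converges and c(ρ) = ∏_{v∈V} (1 − ∑_{v'∈A(v)} ρ_{v'}) / (1 − ∑_{v'∈Ā(v)} ρ_{v'}). -/

import Mathlib

open Finset
open scoped ENNReal NNReal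

def ancestors {n : ℕ} [NeZero n] (par : Fin n → Fin n) (hpar : ∀ v, v ≠ 0 → par v < v) :
    Fin n → Finset (Fin n) :=
  fun v =>
    if h : v = 0 then ∅ else insert (par v) (ancestors par hpar (par v))
termination_by v => (v : ℕ)
decreasing_by exact hpar _ h

/-- `v` together with its strict ancestors. -/
def barA {n : ℕ} [NeZero n] (par : Fin n → Fin n) (hpar : ∀ v, v ≠ 0 → par v < v)
    (v : Fin n) : Finset (Fin n) :=
  insert v (ancestors par hpar v)

/-- `v` together with its descendants. -/
def barD {n : ℕ} [NeZero n] (par : Fin n → Fin n) (hpar : ∀ v, v ≠ 0 → par v < v)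
    (v : Fin n) : Finset (Fin n) :=
  Finset.univ.filter (fun w => v ∈ barA par hpar w)

/-- strict descendants of `v`. -/
def strictD {n : ℕ} [NeZero n] (par : Fin n → Fin n) (hpar : ∀ v, v ≠ 0 → par v < v)
    (v : Fin n) : Finset (Fin n) :=
  Finset.univ.filter (fun w => v ∈ ancestors par hpar w)

/-- children of `v`. -/
def children {n : ℕ} [NeZero n] (par : Fin n → Fin n) (v : Fin n) : Finset (Fin n) :=
  Finset.univ.filter (fun w => w ≠ 0 ∧ par w = v)

variable {n : ℕ} [NeZero n] (par : Fin n → Fin n) (hpar : ∀ v, v ≠ 0 → par v < v)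

theorem anc_eq {v : Fin n} (h0 : v ≠ 0) :
    ancestors par hpar v = insert (par v) (ancestors par hpar (par v)) := by
  rw [ancestors, dif_neg h0]

theorem lt_of_mem_anc {v u : Fin n} (h : u ∈ ancestors par hpar v) : u < v := by
  rw [ancestors] at h
  split_ifs at h with h0
  · simp at h
  · rcases Finset.mem_insert.1 h with rfl | h'
    · exact hpar v h0
    · exact (lt_of_mem_anc h').trans (hpar v h0)
termination_by (v : ℕ)
decreasing_by exact hpar v h0

theorem anc_trans {v u : Fin n} (h : u ∈ ancestors par hpar v) :
    ancestors par hpar u ⊆ ancestors par hpar v := by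
  rw [ancestors] at h
  split_ifs at h with h0
  · simp at h
  · rw [anc_eq par hpar h0]
    rcases Finset.mem_insert.1 h with rfl | h'
    · exact Finset.subset_insert _ _
    · exact (anc_trans h').trans (Finset.subset_insert _ _)
termination_by (v : ℕ)
decreasing_by exact hpar v h0

theorem anc_total {v u₁ u₂ : Fin n} (h₁ : u₁ ∈ ancestors par hpar v)
    (h₂ : u₂ ∈ ancestors par hpar v) :
    u₁ = u₂ ∨ u₁ ∈ ancestors par hpar u₂ ∨ u₂ ∈ ancestors par hpar u₁ := by
  rw [ancestors] at h₁ h₂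
  by_cases h0 : v = 0
  · rw [dif_pos h0] at h₁; simp at h₁
  · rw [dif_neg h0] at h₁ h₂
    rcases Finset.mem_insert.1 h₁ with rfl | h₁' <;> rcases Finset.mem_insert.1 h₂ with h₂e | h₂'
    · exact Or.inl h₂e.symm
    · exact Or.inr (Or.inr h₂')
    · exact h₂e ▸ Or.inr (Or.inl h₁')
    · exact anc_total h₁' h₂'
termination_by (v : ℕ)
decreasing_by exact hpar v h0

lemma not_mem_anc_self (v : Fin n) : v ∉ ancestors par hpar v :=
  fun h => lt_irrefl v (lt_of_mem_anc par hpar h)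

lemma mem_barA_iff {u v : Fin n} :
    u ∈ barA par hpar v ↔ u = v ∨ u ∈ ancestors par hpar v := by
  simp [barA]

lemma mem_strictD_iff {w v : Fin n} :
    w ∈ strictD par hpar v ↔ v ∈ ancestors par hpar w := by
  simp [strictD]

lemma mem_barD_iff {w v : Fin n} :
    w ∈ barD par hpar v ↔ v ∈ barA par hpar w := by
  simp [barD]

lemma not_mem_strictD_self (v : Fin n) : v ∉ strictD par hpar v := by
  simp [mem_strictD_iff, not_mem_anc_self]

lemma barD_eq (v : Fin n) : barD par hpar v = insert v (strictD par hpar v) := by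
  ext w
  simp [mem_barD_iff, mem_strictD_iff, mem_barA_iff, eq_comm (a := w) (b := v)]

lemma anc_antisymm {u v : Fin n} (h1 : u ∈ ancestors par hpar v) :
    v ∉ ancestors par hpar u :=
  fun h2 => absurd ((lt_of_mem_anc par hpar h1).trans (lt_of_mem_anc par hpar h2)) (lt_irrefl u)

lemma barA_subset_of_mem {v w : Fin n} (h : v ∈ barA par hpar w) :
    barA par hpar v ⊆ barA par hpar w := by
  rcases (mem_barA_iff par hpar).1 h with rfl | h'
  · exact subset_rfl
  · intro u hu
    rcases (mem_barA_iff par hpar).1 hu with rfl | hu'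
    · exact (mem_barA_iff par hpar).2 (Or.inr h')
    · exact (mem_barA_iff par hpar).2 (Or.inr (anc_trans par hpar h' hu'))

lemma barA_trich {u v w : Fin n} (hu : u ∈ barA par hpar w) (hv : v ∈ barA par hpar w) :
    u = v ∨ u ∈ ancestors par hpar v ∨ v ∈ ancestors par hpar u := by
  rcases (mem_barA_iff par hpar).1 hu with rfl | hu' <;>
    rcases (mem_barA_iff par hpar).1 hv with h | hv'
  · exact Or.inl h.symm
  · exact Or.inr (Or.inr hv')
  · exact Or.inr (Or.inl (h ▸ hu'))
  · rcases anc_total par hpar hu' hv' with h | h | h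
    · exact Or.inl h
    · exact Or.inr (Or.inl h)
    · exact Or.inr (Or.inr h)

lemma barA_sdiff_eq {v w : Fin n} (hvw : v ∈ barA par hpar w) :
    barA par hpar w \ barA par hpar v = barA par hpar w ∩ strictD par hpar v := by
  ext u
  simp only [Finset.mem_sdiff, Finset.mem_inter, mem_strictD_iff, mem_barA_iff]
  constructor
  · rintro ⟨hu, hnot⟩
    push_neg at hnot
    refine ⟨hu, ?_⟩
    rcases barA_trich par hpar ((mem_barA_iff par hpar).2 hu) hvw with h | h | h
    · exact absurd h hnot.1
    · exact absurd h hnot.2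
    · exact h
  · rintro ⟨hu, hanc⟩
    refine ⟨hu, fun h => ?_⟩
    rcases h with rfl | h
    · exact not_mem_anc_self par hpar u hanc
    · exact anc_antisymm par hpar h hanc

lemma sum_barA_split {M : Type*} [AddCommMonoid M] (g : Fin n → M) {v w : Fin n}
    (hvw : v ∈ barA par hpar w) :
    ∑ u ∈ barA par hpar w, g u =
      (∑ u ∈ barA par hpar w ∩ strictD par hpar v, g u) + g v +
        ∑ u ∈ ancestors par hpar v, g u := by
  rw [← Finset.sum_sdiff (barA_subset_of_mem par hpar hvw), barA_sdiff_eq par hpar hvw]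
  rw [show barA par hpar v = insert v (ancestors par hpar v) from rfl,
    Finset.sum_insert (not_mem_anc_self par hpar v), ← add_assoc]

lemma disj_barA {v w : Fin n} (hvw : v ∉ barA par hpar w) {u : Fin n}
    (hu : u ∈ barA par hpar w) : u ≠ v ∧ v ∉ ancestors par hpar u := by
  constructor
  · rintro rfl; exact hvw hu
  · intro hv
    rcases (mem_barA_iff par hpar).1 hu with rfl | hu'
    · exact hvw ((mem_barA_iff par hpar).2 (Or.inr hv))
    · exact hvw ((mem_barA_iff par hpar).2 (Or.inr (anc_trans par hpar hu' hv)))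

lemma ennreal_choose_geom {r : ℝ≥0∞} (hr : r < 1) (D : ℕ) :
    ∑' k : ℕ, r ^ k * ((k + D).choose k : ℝ≥0∞) = (1 - r)⁻¹ ^ (D + 1) := by
  lift r to ℝ≥0 using hr.ne_top with x
  have hx1 : x < 1 := by exact_mod_cast hr
  have hxr : (x : ℝ) < 1 := hx1
  have hxr' : ‖(x : ℝ)‖ < 1 := by rwa [Real.norm_eq_abs, abs_of_nonneg x.coe_nonneg]
  have hreal : HasSum (fun k : ℕ => ((k + D).choose D : ℝ) * (x : ℝ) ^ k)
      (1 / (1 - (x : ℝ)) ^ (D + 1)) := hasSum_choose_mul_geometric_of_norm_lt_one D hxr'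
  have hnn : HasSum (fun k : ℕ => x ^ k * ((k + D).choose k : ℝ≥0))
      ((1 - x)⁻¹ ^ (D + 1)) := by
    rw [← NNReal.hasSum_coe]
    convert hreal using 2 with k
    · rw [mul_comm, Nat.choose_symm_add]
      push_cast
      ring
    · rw [one_div, NNReal.coe_pow, NNReal.coe_inv, NNReal.coe_sub hx1.le, NNReal.coe_one,
        inv_pow]
  have h2 := ENNReal.hasSum_coe.2 hnn
  have h3 : (fun k : ℕ => ((x ^ k * ((k + D).choose k : ℝ≥0) : ℝ≥0) : ℝ≥0∞)) =
      fun k : ℕ => (x : ℝ≥0∞) ^ k * ((k + D).choose k : ℝ≥0∞) := by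
    funext k
    push_cast
    ring
  rw [h3] at h2
  rw [h2.tsum_eq, ENNReal.coe_pow, ENNReal.coe_inv (by
    simp [tsub_eq_zero_iff_le, not_le.2 hx1] : (1 : ℝ≥0) - x ≠ 0), ENNReal.coe_sub,
    ENNReal.coe_one]

noncomputable def Fterm (ρ : Fin n → ℝ≥0∞) (m : Fin n → ℕ) : ℝ≥0∞ :=
  ∏ u, ρ u ^ m u * ((∑ w ∈ barD par hpar u, m w).choose (m u) : ℝ≥0∞)

noncomputable def peelρ (ρ : Fin n → ℝ≥0∞) (v : Fin n) : Fin n → ℝ≥0∞ :=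
  fun u => if u = v then 0 else
    if u ∈ strictD par hpar v then ρ u * (1 - ρ v)⁻¹ else ρ u

lemma Fterm_update (ρ : Fin n → ℝ≥0∞) {v : Fin n}
    (hanc : ∀ u ∈ ancestors par hpar v, ρ u = 0) (m : Fin n → ℕ) (k : ℕ) :
    Fterm par hpar ρ (Function.update m v k) =
      ρ v ^ k * ((k + ∑ w ∈ strictD par hpar v, m w).choose k : ℝ≥0∞) *
        Fterm par hpar ρ (Function.update m v 0) := by
  by_cases hzero : ∀ u ∈ ancestors par hpar v, m u = 0
  · have key : ∀ j : ℕ, Fterm par hpar ρ (Function.update m v j) =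
        ρ v ^ j * ((j + ∑ w ∈ strictD par hpar v, m w).choose j : ℝ≥0∞) *
          ∏ u ∈ Finset.univ.erase v,
            ρ u ^ m u * ((∑ w ∈ barD par hpar u, Function.update m v 0 w).choose (m u) : ℝ≥0∞) := by
      intro j
      rw [Fterm, ← Finset.mul_prod_erase Finset.univ _ (Finset.mem_univ v)]
      congr 1
      · -- factor at v
        rw [Function.update_self]
        have hs : ∑ w ∈ barD par hpar v, Function.update m v j w =
            j + ∑ w ∈ strictD par hpar v, m w := by
          rw [barD_eq, Finset.sum_insert (not_mem_strictD_self par hpar v),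
            Function.update_self]
          congr 1
          refine Finset.sum_congr rfl fun w hw => ?_
          have hwv : w ≠ v := by rintro rfl; exact not_mem_strictD_self par hpar w hw
          exact Function.update_of_ne hwv _ _
        rw [hs]
      · -- off-v factors
        refine Finset.prod_congr rfl fun u hu => ?_
        have huv : u ≠ v := (Finset.mem_erase.1 hu).1
        rw [Function.update_of_ne huv]
        by_cases hua : u ∈ ancestors par hpar v
        · have hmu : m u = 0 := hzero u hua
          simp [hmu]
        · have hv_not : v ∉ barD par hpar u := by
            rw [mem_barD_iff, mem_barA_iff]
            push_neg
            exact ⟨huv, hua⟩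
          have hsum : ∑ w ∈ barD par hpar u, Function.update m v j w =
              ∑ w ∈ barD par hpar u, Function.update m v 0 w := by
            refine Finset.sum_congr rfl fun w hw => ?_
            have hwv : w ≠ v := by rintro rfl; exact hv_not hw
            rw [Function.update_of_ne hwv, Function.update_of_ne hwv]
          rw [hsum]
    rw [key k, key 0]
    simp only [pow_zero, Nat.choose_zero_right, Nat.cast_one, one_mul, zero_add]
  · push_neg at hzero
    obtain ⟨u0, hu0, hmu0⟩ := hzero
    have hu0v : u0 ≠ v := fun h => not_mem_anc_self par hpar v (h ▸ hu0)
    have hz : ∀ j : ℕ, Fterm par hpar ρ (Function.update m v j) = 0 := by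
      intro j
      rw [Fterm]
      refine Finset.prod_eq_zero (Finset.mem_univ u0) ?_
      rw [Function.update_of_ne hu0v, hanc u0 hu0, zero_pow hmu0, zero_mul]
    rw [hz, hz, mul_zero]

lemma Fterm_peel_zero (ρ : Fin n → ℝ≥0∞) (v : Fin n) (m : Fin n → ℕ) :
    Fterm par hpar (peelρ par hpar ρ v) (Function.update m v 0) =
      ((1 - ρ v)⁻¹) ^ (∑ w ∈ strictD par hpar v, m w) *
        Fterm par hpar ρ (Function.update m v 0) := by
  classical
  have key : ∀ u : Fin n, peelρ par hpar ρ v u ^ (Function.update m v 0 u) =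
      (1 - ρ v)⁻¹ ^ (if u ∈ strictD par hpar v then Function.update m v 0 u else 0) *
        ρ u ^ (Function.update m v 0 u) := by
    intro u
    by_cases huv : u = v
    · subst huv
      simp [peelρ, if_neg (not_mem_strictD_self par hpar u)]
    · by_cases hus : u ∈ strictD par hpar v
      · simp only [peelρ, if_neg huv, if_pos hus, mul_pow]
        ring
      · simp [peelρ, if_neg huv, if_neg hus]
  rw [Fterm, Fterm]
  calc ∏ u, peelρ par hpar ρ v u ^ (Function.update m v 0 u) *
        ((∑ w ∈ barD par hpar u, Function.update m v 0 w).choose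
          (Function.update m v 0 u) : ℝ≥0∞)
      = ∏ u, ((1 - ρ v)⁻¹ ^ (if u ∈ strictD par hpar v then Function.update m v 0 u else 0)
          * (ρ u ^ (Function.update m v 0 u) *
            ((∑ w ∈ barD par hpar u, Function.update m v 0 w).choose
              (Function.update m v 0 u) : ℝ≥0∞))) :=
        Finset.prod_congr rfl fun u _ => by rw [key u, mul_assoc]
    _ = (∏ u, (1 - ρ v)⁻¹ ^ (if u ∈ strictD par hpar v then Function.update m v 0 u else 0))
          * ∏ u, ρ u ^ (Function.update m v 0 u) *
            ((∑ w ∈ barD par hpar u, Function.update m v 0 w).choose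
              (Function.update m v 0 u) : ℝ≥0∞) := Finset.prod_mul_distrib
    _ = _ := by
        congr 1
        rw [Finset.prod_pow_eq_pow_sum]
        congr 1
        rw [Finset.sum_ite_mem, Finset.univ_inter]
        refine Finset.sum_congr rfl fun w hw => ?_
        have hwv : w ≠ v := by rintro rfl; exact not_mem_strictD_self par hpar w hw
        rw [Function.update_of_ne hwv]

lemma peel_tsum (ρ : Fin n → ℝ≥0∞) {v : Fin n} (hv1 : ρ v < 1)
    (hanc : ∀ u ∈ ancestors par hpar v, ρ u = 0) :
    ∑' m : Fin n → ℕ, Fterm par hpar ρ m =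
      (1 - ρ v)⁻¹ * ∑' m : Fin n → ℕ, Fterm par hpar (peelρ par hpar ρ v) m := by
  classical
  have hanc' : ∀ u ∈ ancestors par hpar v, peelρ par hpar ρ v u = 0 := by
    intro u hu
    have h1 : u ≠ v := by rintro rfl; exact not_mem_anc_self par hpar u hu
    have h2 : u ∉ strictD par hpar v := by
      rw [mem_strictD_iff]; exact anc_antisymm par hpar hu
    simp [peelρ, h1, h2, hanc u hu]
  set e := (Equiv.piSplitAt v (fun _ : Fin n => ℕ)).symm with he
  have hupd : ∀ (k : ℕ) (μ : {j : Fin n // j ≠ v} → ℕ),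
      e (k, μ) = Function.update (e (0, μ)) v k := by
    intro k μ; funext j
    by_cases hj : j = v
    · subst hj; simp [he, Equiv.piSplitAt, Function.update_self]
    · simp [he, Equiv.piSplitAt, hj, Function.update_of_ne hj]
  have main : ∀ (σ : Fin n → ℝ≥0∞), (∑' m : Fin n → ℕ, Fterm par hpar σ m) =
      ∑' μ : {j : Fin n // j ≠ v} → ℕ, ∑' k : ℕ,
        Fterm par hpar σ (Function.update (e (0, μ)) v k) := by
    intro σ
    rw [← Equiv.tsum_eq e (Fterm par hpar σ), ENNReal.tsum_prod', ENNReal.tsum_comm]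
    exact tsum_congr fun μ => tsum_congr fun k => by rw [hupd]
  rw [main, main, ← ENNReal.tsum_mul_left]
  refine tsum_congr fun μ => ?_
  set m0 : Fin n → ℕ := e (0, μ) with hm0
  set D := ∑ w ∈ strictD par hpar v, m0 w with hD
  have hL : ∑' k : ℕ, Fterm par hpar ρ (Function.update m0 v k) =
      (1 - ρ v)⁻¹ ^ (D + 1) * Fterm par hpar ρ (Function.update m0 v 0) := by
    calc ∑' k : ℕ, Fterm par hpar ρ (Function.update m0 v k)
        = ∑' k : ℕ, (ρ v ^ k * ((k + D).choose k : ℝ≥0∞)) *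
            Fterm par hpar ρ (Function.update m0 v 0) :=
          tsum_congr fun k => by rw [Fterm_update par hpar ρ hanc m0 k]
      _ = (∑' k : ℕ, ρ v ^ k * ((k + D).choose k : ℝ≥0∞)) *
            Fterm par hpar ρ (Function.update m0 v 0) := ENNReal.tsum_mul_right
      _ = _ := by rw [ennreal_choose_geom hv1]
  have hpeel : ∀ k : ℕ, Fterm par hpar (peelρ par hpar ρ v) (Function.update m0 v k) =
      (peelρ par hpar ρ v v) ^ k * ((k + D).choose k : ℝ≥0∞) *
        Fterm par hpar (peelρ par hpar ρ v) (Function.update m0 v 0) :=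
    fun k => Fterm_update par hpar _ hanc' m0 k
  have hvzero : peelρ par hpar ρ v v = 0 := by simp [peelρ]
  have hR : ∑' k : ℕ, Fterm par hpar (peelρ par hpar ρ v) (Function.update m0 v k) =
      (1 - ρ v)⁻¹ ^ D * Fterm par hpar ρ (Function.update m0 v 0) := by
    rw [tsum_eq_single 0 (fun k hk => by rw [hpeel k, hvzero, zero_pow hk]; ring)]
    rw [hpeel 0, hvzero, Fterm_peel_zero par hpar ρ v m0]
    simp [← hD]
  rw [hL, hR, pow_succ, ← mul_assoc]
  ring

lemma anc_sdiff_eq {v u : Fin n} (h : v ∈ ancestors par hpar u) :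
    ancestors par hpar u \ barA par hpar v = ancestors par hpar u ∩ strictD par hpar v := by
  ext x
  simp only [Finset.mem_sdiff, Finset.mem_inter, mem_strictD_iff, mem_barA_iff]
  constructor
  · rintro ⟨hx, hnot⟩
    push_neg at hnot
    refine ⟨hx, ?_⟩
    rcases barA_trich par hpar ((mem_barA_iff par hpar).2 (Or.inr hx))
      ((mem_barA_iff par hpar).2 (Or.inr h)) with h' | h' | h'
    · exact absurd h' hnot.1
    · exact absurd h' hnot.2
    · exact h'
  · rintro ⟨hx, hanc⟩
    refine ⟨hx, fun h' => ?_⟩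
    rcases h' with rfl | h'
    · exact not_mem_anc_self par hpar x hanc
    · exact anc_antisymm par hpar h' hanc

lemma barA_subset_anc {v u : Fin n} (h : v ∈ ancestors par hpar u) :
    barA par hpar v ⊆ ancestors par hpar u := by
  intro x hx
  rcases (mem_barA_iff par hpar).1 hx with rfl | hx'
  · exact h
  · exact anc_trans par hpar h hx'

lemma sum_anc_split {M : Type*} [AddCommMonoid M] (g : Fin n → M) {v u : Fin n}
    (h : v ∈ ancestors par hpar u) :
    ∑ w ∈ ancestors par hpar u, g w =
      (∑ w ∈ ancestors par hpar u ∩ strictD par hpar v, g w) + g v +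
        ∑ w ∈ ancestors par hpar v, g w := by
  rw [← Finset.sum_sdiff (barA_subset_anc par hpar h), anc_sdiff_eq par hpar h]
  rw [show barA par hpar v = insert v (ancestors par hpar v) from rfl,
    Finset.sum_insert (not_mem_anc_self par hpar v), ← add_assoc]

lemma ennreal_sub_div {N d : ℝ≥0∞} (hNd : N ≤ d) (hd0 : d ≠ 0) (hdt : d ≠ ⊤) :
    1 - N * d⁻¹ = (d - N) * d⁻¹ := by
  rw [ENNReal.sub_mul (fun _ _ => ENNReal.inv_ne_top.2 hd0), ENNReal.mul_inv_cancel hd0 hdt]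

lemma ennreal_div_div_cancel (x y : ℝ≥0∞) {d : ℝ≥0∞} (hd0 : d ≠ 0) (hdt : d ≠ ⊤) :
    (x * d⁻¹) / (y * d⁻¹) = x / y := by
  rw [div_eq_mul_inv, ENNReal.mul_inv (Or.inr (ENNReal.inv_ne_top.2 hd0))
    (Or.inr (ENNReal.inv_ne_zero.2 hdt)), inv_inv]
  calc x * d⁻¹ * (y⁻¹ * d) = x * y⁻¹ * (d⁻¹ * d) := by ring
    _ = x / y := by rw [ENNReal.inv_mul_cancel hd0 hdt, mul_one, div_eq_mul_inv]

lemma ennreal_ratio {N A c : ℝ≥0∞} (hNA : N ≤ A) (h : A + c < 1) :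
    (1 - (N + c)) / (1 - (A + c)) = (1 - N * (1 - c)⁻¹) / (1 - A * (1 - c)⁻¹) := by
  have hct : c ≠ ⊤ := fun hc => by simp [hc] at h
  have hc1 : c < 1 := lt_of_le_of_lt (le_add_self) h
  set d := 1 - c with hd
  have hd0 : d ≠ 0 := by
    rw [hd, ← pos_iff_ne_zero]
    exact (ENNReal.cancel_of_ne hct).lt_tsub_iff_right.2 (by simpa using hc1)
  have hdt : d ≠ ⊤ := (tsub_le_self.trans_lt (by norm_num : (1:ℝ≥0∞) < ⊤)).ne
  have hAd : A ≤ d :=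
    le_of_lt ((ENNReal.cancel_of_ne hct).lt_tsub_iff_right.2 h)
  have hNd : N ≤ d := hNA.trans hAd
  have e1 : 1 - (N + c) = d - N := by
    rw [hd, tsub_add_eq_tsub_tsub_swap]
  have e2 : 1 - (A + c) = d - A := by
    rw [hd, tsub_add_eq_tsub_tsub_swap]
  rw [e1, e2, ennreal_sub_div hNd hd0 hdt, ennreal_sub_div hAd hd0 hdt,
    ennreal_div_div_cancel _ _ hd0 hdt]

noncomputable def targetE (ρ : Fin n → ℝ≥0∞) : ℝ≥0∞ :=
  ∏ u, (1 - ∑ w ∈ ancestors par hpar u, ρ w) / (1 - ∑ w ∈ barA par hpar u, ρ w)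

lemma peelρ_eq_zero_on_anc (ρ : Fin n → ℝ≥0∞) {v : Fin n}
    (hanc : ∀ u ∈ ancestors par hpar v, ρ u = 0) :
    ∀ u ∈ ancestors par hpar v, peelρ par hpar ρ v u = 0 := by
  intro u hu
  have h1 : u ≠ v := by rintro rfl; exact not_mem_anc_self par hpar u hu
  have h2 : u ∉ strictD par hpar v := by
    rw [mem_strictD_iff]; exact anc_antisymm par hpar hu
  simp [peelρ, h1, h2, hanc u hu]

lemma sum_barA_self (ρ : Fin n → ℝ≥0∞) (v : Fin n) :
    ∑ w ∈ barA par hpar v, ρ w = ρ v + ∑ w ∈ ancestors par hpar v, ρ w := by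
  rw [show barA par hpar v = insert v (ancestors par hpar v) from rfl,
    Finset.sum_insert (not_mem_anc_self par hpar v)]

lemma target_peel (ρ : Fin n → ℝ≥0∞) {v : Fin n}
    (hload : ∀ w, ∑ u ∈ barA par hpar w, ρ u < 1)
    (hanc : ∀ u ∈ ancestors par hpar v, ρ u = 0) :
    targetE par hpar ρ = (1 - ρ v)⁻¹ * targetE par hpar (peelρ par hpar ρ v) := by
  classical
  set t := (1 - ρ v)⁻¹ with ht
  have hanc0 : ∑ w ∈ ancestors par hpar v, ρ w = 0 := Finset.sum_eq_zero hanc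
  have hanc' := peelρ_eq_zero_on_anc par hpar ρ hanc
  have hanc0' : ∑ w ∈ ancestors par hpar v, peelρ par hpar ρ v w = 0 :=
    Finset.sum_eq_zero hanc'
  rw [targetE, targetE, ← Finset.mul_prod_erase Finset.univ _ (Finset.mem_univ v),
    ← Finset.mul_prod_erase Finset.univ
      (fun u => (1 - ∑ w ∈ ancestors par hpar u, peelρ par hpar ρ v w) /
        (1 - ∑ w ∈ barA par hpar u, peelρ par hpar ρ v w)) (Finset.mem_univ v)]
  have hfv : (1 - ∑ w ∈ ancestors par hpar v, ρ w) / (1 - ∑ w ∈ barA par hpar v, ρ w) = t := by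
    rw [hanc0, sum_barA_self par hpar ρ v, hanc0, add_zero, tsub_zero, ht, one_div]
  have hfv' : (1 - ∑ w ∈ ancestors par hpar v, peelρ par hpar ρ v w) /
      (1 - ∑ w ∈ barA par hpar v, peelρ par hpar ρ v w) = 1 := by
    rw [hanc0', sum_barA_self par hpar _ v, hanc0', add_zero, tsub_zero]
    simp [peelρ]
  rw [hfv, hfv', ← mul_assoc, mul_one]
  congr 1
  refine Finset.prod_congr rfl fun u hu => ?_
  have huv : u ≠ v := (Finset.mem_erase.1 hu).1
  by_cases hvu : v ∈ ancestors par hpar u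
  · have hsplitB := sum_barA_split par hpar ρ ((mem_barA_iff par hpar).2 (Or.inr hvu))
    have hsplitA := sum_anc_split par hpar ρ hvu
    have hsplitB' := sum_barA_split par hpar (peelρ par hpar ρ v)
      ((mem_barA_iff par hpar).2 (Or.inr hvu))
    have hsplitA' := sum_anc_split par hpar (peelρ par hpar ρ v) hvu
    set N := ∑ w ∈ ancestors par hpar u ∩ strictD par hpar v, ρ w with hN
    set B := ∑ w ∈ barA par hpar u ∩ strictD par hpar v, ρ w with hB
    have hpN : ∑ w ∈ ancestors par hpar u ∩ strictD par hpar v, peelρ par hpar ρ v w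
        = N * t := by
      rw [hN, Finset.sum_mul]
      refine Finset.sum_congr rfl fun w hw => ?_
      have hws : w ∈ strictD par hpar v := (Finset.mem_inter.1 hw).2
      have hwv : w ≠ v := by rintro rfl; exact not_mem_strictD_self par hpar w hws
      simp [peelρ, hwv, hws, ht]
    have hpB : ∑ w ∈ barA par hpar u ∩ strictD par hpar v, peelρ par hpar ρ v w
        = B * t := by
      rw [hB, Finset.sum_mul]
      refine Finset.sum_congr rfl fun w hw => ?_
      have hws : w ∈ strictD par hpar v := (Finset.mem_inter.1 hw).2
      have hwv : w ≠ v := by rintro rfl; exact not_mem_strictD_self par hpar w hws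
      simp [peelρ, hwv, hws, ht]
    have hvz : peelρ par hpar ρ v v = 0 := by simp [peelρ]
    rw [hsplitB, hsplitA, hsplitB', hsplitA', hpN, hpB, hvz, hanc0, hanc0']
    have hNB : N ≤ B := Finset.sum_le_sum_of_subset
      (Finset.inter_subset_inter (Finset.subset_insert u _) subset_rfl)
    have hB1 : B + ρ v < 1 := by
      have h' := hload u
      rw [hsplitB, hanc0, add_zero] at h'
      exact h'
    have := ennreal_ratio hNB hB1
    simpa [ht] using this
  · have hvb : v ∉ barA par hpar u := by
      rw [mem_barA_iff]
      push_neg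
      exact ⟨fun h => huv h.symm, hvu⟩
    have h1 : ∑ w ∈ barA par hpar u, peelρ par hpar ρ v w = ∑ w ∈ barA par hpar u, ρ w := by
      refine Finset.sum_congr rfl fun w hw => ?_
      obtain ⟨hwv, hvw⟩ := disj_barA par hpar hvb hw
      have hws : w ∉ strictD par hpar v := by rw [mem_strictD_iff]; exact hvw
      simp [peelρ, hwv, hws]
    have h2 : ∑ w ∈ ancestors par hpar u, peelρ par hpar ρ v w
        = ∑ w ∈ ancestors par hpar u, ρ w := by
      refine Finset.sum_congr rfl fun w hw => ?_
      obtain ⟨hwv, hvw⟩ := disj_barA par hpar hvb (Finset.subset_insert u _ hw)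
      have hws : w ∉ strictD par hpar v := by rw [mem_strictD_iff]; exact hvw
      simp [peelρ, hwv, hws]
    rw [h1, h2]

lemma rho_v_lt_one (ρ : Fin n → ℝ≥0∞) (v : Fin n)
    (hload : ∀ w, ∑ u ∈ barA par hpar w, ρ u < 1) : ρ v < 1 :=
  lt_of_le_of_lt (by rw [sum_barA_self par hpar ρ v] at *; exact le_self_add) (hload v)

lemma peel_load (ρ : Fin n → ℝ≥0∞) {v : Fin n}
    (hload : ∀ w, ∑ u ∈ barA par hpar w, ρ u < 1)
    (hanc : ∀ u ∈ ancestors par hpar v, ρ u = 0) :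
    ∀ w, ∑ u ∈ barA par hpar w, peelρ par hpar ρ v u < 1 := by
  intro w
  have hv1 : ρ v < 1 := rho_v_lt_one par hpar ρ v hload
  have hct : ρ v ≠ ⊤ := hv1.ne_top
  have hd0 : (1 : ℝ≥0∞) - ρ v ≠ 0 := by
    rw [← pos_iff_ne_zero]
    exact (ENNReal.cancel_of_ne hct).lt_tsub_iff_right.2 (by simpa using hv1)
  have hdt : (1 : ℝ≥0∞) - ρ v ≠ ⊤ :=
    (tsub_le_self.trans_lt (by norm_num : (1:ℝ≥0∞) < ⊤)).ne
  by_cases hvw : v ∈ barA par hpar w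
  · rw [sum_barA_split par hpar _ hvw,
      Finset.sum_eq_zero (peelρ_eq_zero_on_anc par hpar ρ hanc), add_zero]
    have hvz : peelρ par hpar ρ v v = 0 := by simp [peelρ]
    rw [hvz, add_zero]
    set B := ∑ u ∈ barA par hpar w ∩ strictD par hpar v, ρ u with hB
    have hpB : ∑ u ∈ barA par hpar w ∩ strictD par hpar v, peelρ par hpar ρ v u
        = B * (1 - ρ v)⁻¹ := by
      rw [hB, Finset.sum_mul]
      refine Finset.sum_congr rfl fun x hx => ?_
      have hxs : x ∈ strictD par hpar v := (Finset.mem_inter.1 hx).2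
      have hxv : x ≠ v := by rintro rfl; exact not_mem_strictD_self par hpar x hxs
      simp [peelρ, hxv, hxs]
    rw [hpB]
    have h' := hload w
    rw [sum_barA_split par hpar ρ hvw, Finset.sum_eq_zero hanc, add_zero] at h'
    have hBd : B < 1 - ρ v := (ENNReal.cancel_of_ne hct).lt_tsub_iff_right.2 h'
    calc B * (1 - ρ v)⁻¹ < (1 - ρ v) * (1 - ρ v)⁻¹ := by
          rw [mul_comm B, mul_comm (1 - ρ v)]
          exact ENNReal.mul_lt_mul_right (ENNReal.inv_ne_zero.2 hdt)
            (ENNReal.inv_ne_top.2 hd0) hBd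
      _ = 1 := ENNReal.mul_inv_cancel hd0 hdt
  · have h1 : ∑ u ∈ barA par hpar w, peelρ par hpar ρ v u
        = ∑ u ∈ barA par hpar w, ρ u := by
      refine Finset.sum_congr rfl fun x hx => ?_
      obtain ⟨hxv, hvx⟩ := disj_barA par hpar hvw hx
      have hxs : x ∉ strictD par hpar v := by rw [mem_strictD_iff]; exact hvx
      simp [peelρ, hxv, hxs]
    rw [h1]
    exact hload w

lemma main_tsum : ∀ (N : ℕ) (ρ : Fin n → ℝ≥0∞),
    (Finset.univ.filter (fun u => ρ u ≠ 0)).card ≤ N →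
    (∀ w, ∑ u ∈ barA par hpar w, ρ u < 1) →
    ∑' m : Fin n → ℕ, Fterm par hpar ρ m = targetE par hpar ρ := by
  intro N
  induction N with
  | zero =>
    intro ρ hcard hload
    have hzero : ∀ u, ρ u = 0 := by
      intro u
      by_contra h
      have hmem : u ∈ Finset.univ.filter (fun u => ρ u ≠ 0) := by simp [h]
      have := Finset.card_pos.2 ⟨u, hmem⟩
      omega
    have h1 : targetE par hpar ρ = 1 := by simp [targetE, hzero]
    have h2 : ∑' m : Fin n → ℕ, Fterm par hpar ρ m = 1 := by
      rw [tsum_eq_single (fun _ => 0) ?_]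
      · simp [Fterm]
      · intro m hm
        obtain ⟨u, hu⟩ := Function.ne_iff.1 hm
        refine Finset.prod_eq_zero (Finset.mem_univ u) ?_
        rw [hzero u, zero_pow (by simpa using hu), zero_mul]
    rw [h1, h2]
  | succ N ih =>
    intro ρ hcard hload
    by_cases hne : (Finset.univ.filter (fun u => ρ u ≠ 0)).Nonempty
    · set v := (Finset.univ.filter (fun u => ρ u ≠ 0)).min' hne with hv
      have hvmem : v ∈ Finset.univ.filter (fun u => ρ u ≠ 0) := Finset.min'_mem _ hne
      have hanc : ∀ u ∈ ancestors par hpar v, ρ u = 0 := by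
        intro u hu
        by_contra h
        have humem : u ∈ Finset.univ.filter (fun u => ρ u ≠ 0) := by simp [h]
        exact absurd (lt_of_mem_anc par hpar hu)
          (not_lt.2 (Finset.min'_le _ u humem))
      have hv1 : ρ v < 1 := rho_v_lt_one par hpar ρ v hload
      have hdt : (1 : ℝ≥0∞) - ρ v ≠ ⊤ :=
        (tsub_le_self.trans_lt (by norm_num : (1:ℝ≥0∞) < ⊤)).ne
      have hsupp : Finset.univ.filter (fun u => peelρ par hpar ρ v u ≠ 0)
          = (Finset.univ.filter (fun u => ρ u ≠ 0)).erase v := by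
        ext u
        simp only [Finset.mem_filter, Finset.mem_erase, Finset.mem_univ, true_and]
        by_cases huv : u = v
        · subst huv
          simp [peelρ]
        · by_cases hus : u ∈ strictD par hpar v
          · simp only [peelρ, if_neg huv, if_pos hus]
            constructor
            · intro h
              exact ⟨huv, fun h0 => h (by rw [h0, zero_mul])⟩
            · rintro ⟨-, h0⟩
              exact mul_ne_zero h0 (ENNReal.inv_ne_zero.2 hdt)
          · simp [peelρ, huv, hus]
      have hcard' : (Finset.univ.filter (fun u => peelρ par hpar ρ v u ≠ 0)).card ≤ N := by
        rw [hsupp, Finset.card_erase_of_mem hvmem]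
        omega
      rw [peel_tsum par hpar ρ hv1 hanc, ih _ hcard' (peel_load par hpar ρ hload hanc),
        target_peel par hpar ρ hload hanc]
    · exact ih ρ (by simp [Finset.not_nonempty_iff_eq_empty.1 hne]) hload

theorem pf_normalization_constant' (ρ : Fin n → ℝ) (hρ : ∀ v, 0 ≤ ρ v)
    (hload : ∀ v, ∑ v' ∈ barA par hpar v, ρ v' < 1) :
    HasSum
      (fun m : Fin n → ℕ =>
        ∏ v, ρ v ^ m v * ((∑ v' ∈ barD par hpar v, m v').choose (m v) : ℝ))
      (∏ v, (1 - ∑ v' ∈ ancestors par hpar v, ρ v') /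
        (1 - ∑ v' ∈ barA par hpar v, ρ v')) := by
  classical
  set σ : Fin n → ℝ≥0∞ := fun v => ENNReal.ofReal (ρ v) with hσ
  set f : (Fin n → ℕ) → ℝ := fun m =>
    ∏ v, ρ v ^ m v * ((∑ v' ∈ barD par hpar v, m v').choose (m v) : ℝ) with hf
  set T : ℝ := ∏ v, (1 - ∑ v' ∈ ancestors par hpar v, ρ v') /
    (1 - ∑ v' ∈ barA par hpar v, ρ v') with hT
  have hsum_anc_le : ∀ v, ∑ v' ∈ ancestors par hpar v, ρ v' ≤
      ∑ v' ∈ barA par hpar v, ρ v' :=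
    fun v => Finset.sum_le_sum_of_subset_of_nonneg (Finset.subset_insert _ _)
      (fun i _ _ => hρ i)
  have hanc_nonneg : ∀ v, 0 ≤ ∑ v' ∈ ancestors par hpar v, ρ v' :=
    fun v => Finset.sum_nonneg fun i _ => hρ i
  have hbar_nonneg : ∀ v, 0 ≤ ∑ v' ∈ barA par hpar v, ρ v' :=
    fun v => Finset.sum_nonneg fun i _ => hρ i
  have hloadE : ∀ w, ∑ u ∈ barA par hpar w, σ u < 1 := by
    intro w
    rw [hσ, ← ENNReal.ofReal_sum_of_nonneg (fun i _ => hρ i)]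
    exact ENNReal.ofReal_lt_one.2 (hload w)
  have hFof : ∀ m, Fterm par hpar σ m = ENNReal.ofReal (f m) := by
    intro m
    rw [hf, Fterm, ENNReal.ofReal_prod_of_nonneg (fun v _ =>
      mul_nonneg (pow_nonneg (hρ v) _) (Nat.cast_nonneg _))]
    refine Finset.prod_congr rfl fun v _ => ?_
    rw [ENNReal.ofReal_mul (pow_nonneg (hρ v) _), ENNReal.ofReal_pow (hρ v),
      ENNReal.ofReal_natCast]
  have hTof : targetE par hpar σ = ENNReal.ofReal T := by
    rw [hT, targetE, ENNReal.ofReal_prod_of_nonneg (fun v _ => div_nonneg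
      (by linarith [hsum_anc_le v, hload v]) (by linarith [hload v]))]
    refine Finset.prod_congr rfl fun v _ => ?_
    rw [ENNReal.ofReal_div_of_pos (by linarith [hload v]),
      ENNReal.ofReal_sub _ (hanc_nonneg v), ENNReal.ofReal_sub _ (hbar_nonneg v),
      ENNReal.ofReal_one, hσ,
      ENNReal.ofReal_sum_of_nonneg (fun i _ => hρ i),
      ENNReal.ofReal_sum_of_nonneg (fun i _ => hρ i)]
  have hmain := main_tsum par hpar
    (Finset.univ.filter (fun u => σ u ≠ 0)).card σ le_rfl hloadE
  rw [hTof] at hmain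
  have htsum : ∑' m : Fin n → ℕ, Fterm par hpar σ m ≠ ⊤ := by
    rw [hmain]; exact ENNReal.ofReal_ne_top
  have hhs := ENNReal.hasSum_toReal htsum
  have hfnn : ∀ m, 0 ≤ f m := fun m => Finset.prod_nonneg fun v _ =>
    mul_nonneg (pow_nonneg (hρ v) _) (Nat.cast_nonneg _)
  have hTnn : 0 ≤ T := Finset.prod_nonneg fun v _ => div_nonneg
    (by linarith [hsum_anc_le v, hload v]) (by linarith [hload v])
  have heq : (fun m : Fin n → ℕ => (Fterm par hpar σ m).toReal) = f := by
    funext m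
    rw [hFof m, ENNReal.toReal_ofReal (hfnn m)]
  have hval : (∑' m : Fin n → ℕ, (Fterm par hpar σ m).toReal) = T := by
    have h2 : (∑' m : Fin n → ℕ, Fterm par hpar σ m).toReal = T := by
      rw [hmain, ENNReal.toReal_ofReal hTnn]
    rw [← h2]
    exact (ENNReal.tsum_toReal_eq
      (fun m => by rw [hFof m]; exact ENNReal.ofReal_ne_top)).symm
  rw [hval, heq] at hhs
  exact hhs

/-- Normalization constant for the PF stationary distribution: the sum over all states
`m ∈ ℕ^V` of `∏_v ρ_v^{m_v} C(∑_{v' ∈ D̄(v)} m_{v'}, m_v)` converges and equals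
`∏_v (1 - ∑_{v' ∈ A(v)} ρ_{v'}) / (1 - ∑_{v' ∈ Ā(v)} ρ_{v'})`. -/
theorem pf_normalization_constant {n : ℕ} [NeZero n] (par : Fin n → Fin n)
    (hpar : ∀ v, v ≠ 0 → par v < v) (ρ : Fin n → ℝ) (hρ : ∀ v, 0 ≤ ρ v)
    (hload : ∀ v, ∑ v' ∈ barA par hpar v, ρ v' < 1) :
    HasSum
      (fun m : Fin n → ℕ =>
        ∏ v, ρ v ^ m v * ((∑ v' ∈ barD par hpar v, m v').choose (m v) : ℝ))
      (∏ v, (1 - ∑ v' ∈ ancestors par hpar v, ρ v') /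
        (1 - ∑ v' ∈ barA par hpar v, ρ v')) :=
  pf_normalization_constant' par hpar ρ hρ hload
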